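/- Every finite-dimensional associative division algebra over ℝ is isomorphic as an ℝ-algebra to ℝ, ℂ, or the quaternions ℍ (Frobenius's theorem). -/

import Mathlib

open Quaternion

section FrobeniusAux
set_option linter.unusedSectionVars false

open Polynomial

variable {D : Type*} [DivisionRing D] [Algebra ℝ D] [FiniteDimensional ℝ D]

/-- Every non-real element of a f.d. real division algebra lies in ℝ + ℝu with u² = -1. -/
theorem exists_sqrt_neg_one {x : D} (hx : x ∉ Set.range (algebraMap ℝ D)) :
    ∃ (a b : ℝ) (u : D), b ≠ 0 ∧ u * u = -1 ∧
      x = a • (1:D) + b • u := by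
  have hint : IsIntegral ℝ x := IsIntegral.of_finite ℝ x
  have hirr : Irreducible (minpoly ℝ x) := minpoly.irreducible hint
  have hmon : (minpoly ℝ x).Monic := minpoly.monic hint
  have hdeg2 : (minpoly ℝ x).natDegree ≤ 2 := hirr.natDegree_le_two
  have hdegpos : 0 < (minpoly ℝ x).natDegree := minpoly.natDegree_pos hint
  have hne1 : (minpoly ℝ x).natDegree ≠ 1 := by
    intro h1
    have := hmon.eq_X_add_C h1
    have hz := minpoly.aeval ℝ x
    rw [this] at hz
    simp only [map_add, aeval_X, aeval_C] at hz
    exact hx ⟨-(minpoly ℝ x).coeff 0, by rw [map_neg]; exact (eq_neg_of_add_eq_zero_left hz).symm⟩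
  have hdeg : (minpoly ℝ x).natDegree = 2 := by omega
  set p := minpoly ℝ x with hp
  -- p = X^2 + C b * X + C c
  set b := p.coeff 1 with hb
  set c := p.coeff 0 with hc
  have hsplit : p = X ^ 2 + (C b * X + C c) := by
    have hpdeg : p.degree = 2 := by
      rw [Polynomial.degree_eq_natDegree hmon.ne_zero, hdeg]; exact (Nat.cast_ofNat).symm
    have hlt : (p - X ^ 2).degree < 2 := by
      have := Polynomial.degree_sub_lt (p := p) (q := X ^ 2)
        (by rw [hpdeg, degree_X_pow]; exact (Nat.cast_ofNat).symm) hmon.ne_zero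
        (by rw [hmon.leadingCoeff, leadingCoeff_X_pow])
      rwa [hpdeg] at this
    have hle : (p - X ^ 2).degree ≤ 1 := by
      rw [Polynomial.degree_le_iff_coeff_zero]
      intro N hN
      apply Polynomial.coeff_eq_zero_of_degree_lt
      have h2 : (1 : ℕ) < N := by exact_mod_cast hN
      exact hlt.trans_le (by exact_mod_cast h2)
    have heq := Polynomial.eq_X_add_C_of_degree_le_one hle
    have hc1 : (p - X ^ 2).coeff 1 = b := by simp [hb, coeff_X_pow]
    have hc0 : (p - X ^ 2).coeff 0 = c := by simp [hc, coeff_X_pow]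
    rw [hc1, hc0] at heq
    linear_combination (norm := ring_nf) heq
  have hz := minpoly.aeval ℝ x
  rw [← hp, hsplit] at hz
  simp only [map_add, map_mul, aeval_X, aeval_C, map_pow] at hz
  have hdisc : b ^ 2 - 4 * c < 0 := by
    by_contra hge
    push_neg at hge
    set r : ℝ := (-b + Real.sqrt (b ^ 2 - 4 * c)) / 2 with hr
    have hroot : p.IsRoot r := by
      rw [hsplit]
      simp only [IsRoot, eval_add, eval_pow, eval_mul, eval_X, eval_C]
      have hsq : Real.sqrt (b ^ 2 - 4 * c) ^ 2 = b ^ 2 - 4 * c := Real.sq_sqrt hge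
      rw [hr]; nlinarith [hsq]
    obtain ⟨q, hq⟩ := dvd_iff_isRoot.mpr hroot
    rcases hirr.isUnit_or_isUnit hq with h | h
    · exact Polynomial.not_isUnit_X_sub_C r h
    · obtain ⟨v, hv, hvq⟩ := Polynomial.isUnit_iff.mp h
      rw [← hvq] at hq
      have : p.natDegree = 1 := by
        rw [hq, Polynomial.natDegree_mul_C (by rintro rfl; exact hv.ne_zero rfl),
          Polynomial.natDegree_X_sub_C]
      omega
  have hcpos : 0 < 4 * c - b ^ 2 := by linarith
  set s := Real.sqrt (4 * c - b ^ 2) with hsdef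
  have hspos : 0 < s := Real.sqrt_pos.mpr hcpos
  have hs2 : s * s = 4 * c - b ^ 2 := Real.mul_self_sqrt hcpos.le
  have hxx : x * x = (-b) • x + (-c) • (1 : D) := by
    have h1 : x * x + b • x + c • (1:D) = 0 := by
      rw [Algebra.smul_def, Algebra.smul_def, mul_one, ← pow_two, add_assoc]; exact hz
    have h2 : x * x = -(b • x + c • (1:D)) :=
      eq_neg_of_add_eq_zero_left (by rw [← add_assoc]; exact h1)
    rw [h2, neg_add, neg_smul, neg_smul]
  refine ⟨-b/2, s/2, (2/s) • x + (b/s) • (1:D), by positivity, ?_, ?_⟩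
  · rw [show (-1:D) = ((-1:ℝ)) • (1:D) by simp]
    simp only [mul_add, add_mul, smul_mul_smul_comm, one_mul, mul_one]
    rw [hxx]
    match_scalars
    · field_simp; ring
    · field_simp
      nlinarith [hs2]
  · match_scalars
    · field_simp
    · field_simp; ring

theorem mem_range_liftAux {i : D} (hi : i * i = -1) {z : D} (hzc : z * i = i * z) :
    z ∈ Set.range (Complex.liftAux i hi) := by
  by_cases hzr : z ∈ Set.range (algebraMap ℝ D)
  · obtain ⟨a, rfl⟩ := hzr
    exact ⟨(a : ℂ), by simp [Complex.liftAux_apply]⟩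
  · obtain ⟨a, b, u, hb, hu, rfl⟩ := exists_sqrt_neg_one hzr
    have hui : u * i = i * u := by
      have h1 : (a • (1:D) + b • u) * i = i * (a • (1:D) + b • u) := hzc
      simp only [add_mul, mul_add, smul_mul_assoc, mul_smul_comm, one_mul, mul_one] at h1
      have h2 : b • (u * i) = b • (i * u) := add_left_cancel h1
      exact smul_right_injective D hb h2
    have hprod : (u - i) * (u + i) = 0 := by
      have expand : (u - i) * (u + i) = u * u + u * i - i * u - i * i := by noncomm_ring
      rw [expand, hu, hi, hui]; abel
    rcases mul_eq_zero.mp hprod with h | h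
    · have huei : u = i := sub_eq_zero.mp h
      refine ⟨Complex.mk a b, ?_⟩
      rw [Complex.liftAux_apply, huei, Algebra.algebraMap_eq_smul_one]
    · have huei : u = -i := eq_neg_of_add_eq_zero_left h
      refine ⟨Complex.mk a (-b), ?_⟩
      rw [Complex.liftAux_apply, Algebra.algebraMap_eq_smul_one, huei, smul_neg, ← neg_smul]

theorem decomp {i : D} (hi : i * i = -1) (d : D) :
    ∃ dp dm : D, d = dp + dm ∧ dp * i = i * dp ∧ dm * i = -(i * dm) := by
  have h1 : i * d * i * i = -(i * d) := by rw [mul_assoc (i*d), hi, mul_neg_one]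
  have h2 : i * (i * d * i) = -(d * i) := by
    rw [show i * (i * d * i) = (i * i) * d * i by noncomm_ring, hi]; noncomm_ring
  refine ⟨(2⁻¹:ℝ) • (d - i * d * i), (2⁻¹:ℝ) • (d + i * d * i), by module, ?_, ?_⟩
  · rw [smul_mul_assoc, mul_smul_comm]
    congr 1
    rw [sub_mul, mul_sub, h1, h2]
    abel
  · rw [smul_mul_assoc, mul_smul_comm, ← smul_neg]
    congr 1
    rw [add_mul, mul_add, h1, h2]
    abel

open Quaternion in
theorem frobenius_classification' :
    Nonempty (D ≃ₐ[ℝ] ℝ) ∨ Nonempty (D ≃ₐ[ℝ] ℂ) ∨ Nonempty (D ≃ₐ[ℝ] ℍ[ℝ]) := by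
  by_cases h1 : ∀ y : D, y ∈ Set.range (algebraMap ℝ D)
  · left
    refine ⟨(AlgEquiv.ofBijective (Algebra.ofId ℝ D) ⟨?_, fun y => h1 y⟩).symm⟩
    exact fun p q h => (algebraMap ℝ D).injective h
  · push_neg at h1
    obtain ⟨x, hx⟩ := h1
    obtain ⟨a0, b0, u, hb0, hu, -⟩ := exists_sqrt_neg_one hx
    set f := Complex.liftAux u hu with hf
    have finj : Function.Injective f := (f : ℂ →+* D).injective
    by_cases h2 : ∀ d : D, d ∈ Set.range f
    · right; left
      exact ⟨(AlgEquiv.ofBijective f ⟨finj, fun d => h2 d⟩).symm⟩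
    · right; right
      push_neg at h2
      obtain ⟨d0, hd0⟩ := h2
      obtain ⟨dp, dm, hsum, hpc, hmc⟩ := decomp hu d0
      have hw : dm ≠ 0 := by
        rintro rfl
        rw [add_zero] at hsum
        exact hd0 (hsum ▸ mem_range_liftAux hu hpc)
      have hwu : dm * u = -(u * dm) := hmc
      have hww : (dm * dm) * u = u * (dm * dm) := by
        calc (dm * dm) * u = dm * (dm * u) := mul_assoc _ _ _
          _ = dm * (-(u * dm)) := by rw [hwu]
          _ = -((dm * u) * dm) := by rw [mul_neg, mul_assoc]
          _ = -((-(u * dm)) * dm) := by rw [hwu]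
          _ = (u * dm) * dm := by rw [neg_mul, neg_neg]
          _ = u * (dm * dm) := mul_assoc _ _ _
      obtain ⟨z, hzw⟩ := mem_range_liftAux hu hww
      have hanti : ∀ ζ : ℂ, dm * f ζ = f (starRingEnd ℂ ζ) * dm := by
        intro ζ
        rw [hf, Complex.liftAux_apply, Complex.liftAux_apply, Complex.conj_re,
          Complex.conj_im]
        rw [mul_add, add_mul, mul_smul_comm, smul_mul_assoc, hwu,
          ← Algebra.commutes ζ.re dm]
        simp [smul_neg, ← neg_smul]
      have him : z.im = 0 := by
        have hassoc : f z * dm = dm * f z := by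
          rw [hzw]; exact mul_assoc dm dm dm
        rw [hanti z] at hassoc
        have hfz : f z = f (starRingEnd ℂ z) := mul_right_cancel₀ hw hassoc
        have := finj hfz
        have := Complex.conj_eq_iff_im.mp this.symm
        exact this
      set t := z.re with htdef
      have hwwt : dm * dm = algebraMap ℝ D t := by
        rw [← hzw, Complex.liftAux_apply, him, zero_smul, add_zero]
      have ht : t < 0 := by
        by_contra hge
        push_neg at hge
        set r := Real.sqrt t with hrdef
        have hr2 : r * r = t := Real.mul_self_sqrt hge
        have hsplit : (dm - algebraMap ℝ D r) * (dm + algebraMap ℝ D r) = 0 := by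
          rw [sub_mul, mul_add, mul_add, ← Algebra.commutes r dm, ← map_mul, hr2, hwwt]
          abel
        have hcomm : dm * u = u * dm := by
          rcases mul_eq_zero.mp hsplit with h | h
          · have : dm = algebraMap ℝ D r := sub_eq_zero.mp h
            rw [this, Algebra.commutes]
          · have : dm = -(algebraMap ℝ D r) := eq_neg_of_add_eq_zero_left h
            rw [this, neg_mul, mul_neg, Algebra.commutes]
        have : CharZero D := charZero_of_injective_algebraMap (algebraMap ℝ D).injective
        have hzero : u * dm = 0 := by
          have h2e : u * dm = -(u * dm) := by rw [← hwu, hcomm]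
          have := add_eq_zero_iff_eq_neg.mpr h2e
          rwa [← two_mul, mul_eq_zero, or_iff_right (two_ne_zero)] at this
        have hune : u ≠ 0 := by
          intro h; rw [h, zero_mul] at hu
          exact one_ne_zero (neg_eq_zero.mp hu.symm)
        exact hw ((mul_eq_zero.mp hzero).resolve_left hune)
      set r := Real.sqrt (-t) with hrdef
      have hrpos : 0 < r := Real.sqrt_pos.mpr (by linarith)
      have hr2 : r * r = -t := Real.mul_self_sqrt (by linarith)
      set j := r⁻¹ • dm with hjdef
      have hjne : j ≠ 0 := smul_ne_zero (inv_ne_zero hrpos.ne') hw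
      have hj : j * j = -1 := by
        rw [hjdef, smul_mul_smul_comm, hwwt, Algebra.algebraMap_eq_smul_one, smul_smul]
        rw [show r⁻¹ * r⁻¹ * t = -1 by field_simp; nlinarith [hr2]]
        simp
      have hji : j * u = -(u * j) := by
        rw [hjdef, smul_mul_assoc, mul_smul_comm, hwu, smul_neg]
      -- quaternion basis
      set q : QuaternionAlgebra.Basis D (-1 : ℝ) (0 : ℝ) (-1 : ℝ) :=
        ⟨u, j, u * j, by rw [hu]; simp, by rw [hj]; simp, rfl, by rw [hji]; simp⟩ with hq
      set g : ℍ[ℝ] →ₐ[ℝ] D := q.liftHom with hg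
      have ginj : Function.Injective g := (g : ℍ[ℝ] →+* D).injective
      have gsurj : Function.Surjective g := by
        intro d
        obtain ⟨ep, em, hsum', hpc', hmc'⟩ := decomp hu d
        obtain ⟨ζ₁, h₁⟩ := mem_range_liftAux hu hpc'
        have hinv : j⁻¹ * u = -(u * j⁻¹) := by
          have h' : u * j = -(j * u) := by rw [hji, neg_neg]
          calc j⁻¹ * u = j⁻¹ * (u * j) * j⁻¹ := by
                rw [mul_assoc (j⁻¹) (u * j), mul_assoc u j, mul_inv_cancel₀ hjne, mul_one]
            _ = j⁻¹ * (-(j * u)) * j⁻¹ := by rw [h']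
            _ = -((j⁻¹ * j) * (u * j⁻¹)) := by rw [mul_neg, neg_mul]; congr 1; noncomm_ring
            _ = -(u * j⁻¹) := by rw [inv_mul_cancel₀ hjne, one_mul]
        have hcomm : (em * j⁻¹) * u = u * (em * j⁻¹) := by
          calc (em * j⁻¹) * u = em * (j⁻¹ * u) := mul_assoc _ _ _
            _ = em * (-(u * j⁻¹)) := by rw [hinv]
            _ = -((em * u) * j⁻¹) := by rw [mul_neg, mul_assoc]
            _ = -((-(u * em)) * j⁻¹) := by rw [hmc']
            _ = (u * em) * j⁻¹ := by rw [neg_mul, neg_neg]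
            _ = u * (em * j⁻¹) := mul_assoc _ _ _
        obtain ⟨ζ₂, h₂⟩ := mem_range_liftAux hu hcomm
        have hem : em = f ζ₂ * j := by
          rw [h₂, mul_assoc, inv_mul_cancel₀ hjne, mul_one]
        refine ⟨(⟨ζ₁.re, ζ₁.im, ζ₂.re, ζ₂.im⟩ : ℍ[ℝ,-1,0,-1]), ?_⟩
        have hgval : g (⟨ζ₁.re, ζ₁.im, ζ₂.re, ζ₂.im⟩ : ℍ[ℝ,-1,0,-1]) =
            algebraMap ℝ D ζ₁.re + ζ₁.im • u + ζ₂.re • j + ζ₂.im • (u * j) := rfl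
        rw [hgval, hsum', ← h₁, hem, hf, Complex.liftAux_apply, Complex.liftAux_apply,
          add_mul, smul_mul_assoc, ← Algebra.smul_def]
        abel
      exact ⟨(AlgEquiv.ofBijective g ⟨ginj, gsurj⟩).symm⟩

end FrobeniusAux

/-- Frobenius: every finite-dimensional division algebra over ℝ is isomorphic to
ℝ, ℂ, or the Hamilton quaternions ℍ. -/
theorem frobenius_classification (D : Type*) [DivisionRing D] [Algebra ℝ D]
    [FiniteDimensional ℝ D] :
    Nonempty (D ≃ₐ[ℝ] ℝ) ∨ Nonempty (D ≃ₐ[ℝ] ℂ) ∨ Nonempty (D ≃ₐ[ℝ] ℍ[ℝ]) :=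
  frobenius_classification' (D := D)
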